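/- Let F be a finite group and let S be a normal subgroup of F which is simple non-abelian and of index 2 in F. If the outer automorphism group Out(S) is solvable, then the outer automorphism group Out(F) is solvable. -/

import Mathlib

/-- The inner automorphisms form a normal subgroup of the automorphism group. -/
instance innerAutRange_normal {G : Type*} [Group G] :
    ((MulAut.conj : G →* MulAut G).range).Normal := by
  constructor
  intro x hx φ
  obtain ⟨g, rfl⟩ := hx
  refine ⟨φ g, ?_⟩
  ext y
  simp only [MulAut.conj_apply, MulAut.mul_apply, MulAut.inv_def, map_mul, map_inv,
    MulEquiv.apply_symm_apply]

/-- The outer automorphism group `Out(G) = Aut(G)/Inn(G)`. -/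
def OutGroup (G : Type*) [Group G] : Type _ :=
  MulAut G ⧸ (MulAut.conj : G →* MulAut G).range

noncomputable instance (G : Type*) [Group G] : Group (OutGroup G) :=
  inferInstanceAs (Group (MulAut G ⧸ (MulAut.conj : G →* MulAut G).range))

section AuxSmall
variable {G : Type*} [Group G]

lemma aux_sq (h : Nat.card G ∣ 2) (x : G) : x * x = 1 := by
  obtain ⟨k, hk⟩ := h
  calc x * x = x ^ 2 := (sq x).symm
  _ = (x ^ Nat.card G) ^ k := by rw [← pow_mul, ← hk]
  _ = 1 := by rw [pow_card_eq_one', one_pow]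

lemma aux_eq (h : Nat.card G ∣ 2) {x y : G} (hx : x ≠ 1) (hy : y ≠ 1) : x = y := by
  by_contra hxy
  have hfin : Finite G := Nat.finite_of_card_ne_zero (by
    rintro h0; rw [h0] at h; exact (by norm_num : ¬ (0:ℕ) ∣ 2) h)
  have h3 : 3 ≤ Nat.card G := by
    have : Function.Injective (fun i : Fin 3 => (![1, x, y] : Fin 3 → G) i) := by
      intro i j hij
      fin_cases i <;> fin_cases j <;> simp_all
    simpa using Nat.card_le_card_of_injective _ this
  have h2 : Nat.card G ≤ 2 := Nat.le_of_dvd (by norm_num) h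
  omega

lemma aux_comm (h : Nat.card G ∣ 2) (x y : G) : x * y = y * x := by
  have hxy := aux_sq h (x * y)
  have h1 : x * y = (x * y)⁻¹ := by rw [eq_inv_iff_mul_eq_one]; exact hxy
  rw [h1, mul_inv_rev, ← eq_inv_iff_mul_eq_one.mpr (aux_sq h x),
    ← eq_inv_iff_mul_eq_one.mpr (aux_sq h y)]

end AuxSmall

section Main
variable {F : Type*} [Group F] (S : Subgroup F)

lemma aux_normal_of_index_two (T : Subgroup F) (hT : T.index = 2) : T.Normal := by
  constructor
  intro t ht g
  rw [Subgroup.mul_mem_iff_of_index_two hT, Subgroup.mul_mem_iff_of_index_two hT, inv_mem_iff]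
  tauto

lemma aux_unique [S.Normal] [IsSimpleGroup ↥S] (hna : ∃ a b : ↥S, a * b ≠ b * a)
    (hidx : S.index = 2) (T : Subgroup F) (hT : T.index = 2) : T = S := by
  haveI : T.Normal := aux_normal_of_index_two T hT
  rcases (Subgroup.normal_subgroupOf (H := S) (N := T)).eq_bot_or_eq_top with hbot | htop
  · exfalso
    have hcard : Nat.card ↥S ∣ 2 := by
      have h1 : T.relIndex S ∣ T.index := Subgroup.relIndex_dvd_index_of_normal T S
      rw [hT] at h1
      rwa [Subgroup.relIndex, hbot, Subgroup.index_bot] at h1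
    obtain ⟨a, b, hab⟩ := hna
    exact hab (aux_comm hcard a b)
  · have hST : S ≤ T := Subgroup.subgroupOf_eq_top.mp htop
    have h1 : S.relIndex T * T.index = S.index := Subgroup.relIndex_mul_index hST
    rw [hT, hidx] at h1
    have h2 : S.relIndex T = 1 := by omega
    exact le_antisymm (Subgroup.relIndex_eq_one.mp h2) hST

lemma aux_center_bot [IsSimpleGroup ↥S] (hna : ∃ a b : ↥S, a * b ≠ b * a) :
    Subgroup.center ↥S = ⊥ := by
  rcases (Subgroup.Normal.eq_bot_or_eq_top
      (inferInstance : (Subgroup.center ↥S).Normal)) with h | h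
  · exact h
  · exfalso
    obtain ⟨a, b, hab⟩ := hna
    exact hab ((Subgroup.mem_center_iff.mp (h ▸ Subgroup.mem_top b)) a)

lemma aux_cent_card [S.Normal] [IsSimpleGroup ↥S] (hna : ∃ a b : ↥S, a * b ≠ b * a)
    (hidx : S.index = 2) : Nat.card ↥(Subgroup.centralizer (S : Set F)) ∣ 2 := by
  set Z := Subgroup.centralizer (S : Set F) with hZ
  have hbot : S.subgroupOf Z = ⊥ := by
    rw [eq_bot_iff]
    rintro ⟨z, hz⟩ hmem
    have hzS : z ∈ S := hmem
    have : (⟨z, hzS⟩ : ↥S) ∈ Subgroup.center ↥S := by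
      rw [Subgroup.mem_center_iff]
      intro g
      exact Subtype.ext (Subgroup.mem_centralizer_iff.mp hz ↑g g.2)
    rw [aux_center_bot S hna, Subgroup.mem_bot] at this
    have hz1 : z = 1 := congrArg Subtype.val this
    exact Subgroup.mem_bot.mpr (Subtype.ext hz1)
  have h1 : S.relIndex Z ∣ S.index := Subgroup.relIndex_dvd_index_of_normal S Z
  rw [hidx] at h1
  rwa [Subgroup.relIndex, hbot, Subgroup.index_bot] at h1

/-- Automorphisms of `F` fixing `S` pointwise. -/
def fixS : Subgroup (MulAut F) where
  carrier := {φ | ∀ s ∈ S, φ s = s}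
  one_mem' := fun s _ => rfl
  mul_mem' := by
    intro a b ha hb s hs
    show a (b s) = s
    rw [hb s hs, ha s hs]
  inv_mem' := by
    intro a ha s hs
    show a⁻¹ s = s
    conv_lhs => rw [← ha s hs]
    exact a.left_inv s

lemma fixS_c_mem [S.Normal] {φ : MulAut F} (hφ : φ ∈ fixS S) (f : F) :
    f⁻¹ * φ f ∈ Subgroup.centralizer (S : Set F) := by
  rw [Subgroup.mem_centralizer_iff]
  intro s hs
  have h1 : f * s * f⁻¹ ∈ S := Subgroup.Normal.conj_mem ‹S.Normal› s hs f
  have h2 : φ (f * s * f⁻¹) = f * s * f⁻¹ := hφ _ h1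
  rw [map_mul, map_mul, map_inv, hφ s hs] at h2
  have h4 : φ f * s = f * s * f⁻¹ * φ f := by
    rw [← h2]; group
  calc s * (f⁻¹ * φ f) = f⁻¹ * (f * s * f⁻¹ * φ f) := by group
  _ = f⁻¹ * (φ f * s) := by rw [← h4]
  _ = f⁻¹ * φ f * s := by group

lemma fixS_fixes_cent (hcard : Nat.card ↥(Subgroup.centralizer (S : Set F)) ∣ 2)
    {φ : MulAut F} (hφ : φ ∈ fixS S) {z : F} (hz : z ∈ Subgroup.centralizer (S : Set F)) :
    φ z = z := by
  by_cases h1 : z = 1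
  · simp [h1]
  have hφz : φ z ∈ Subgroup.centralizer (S : Set F) := by
    rw [Subgroup.mem_centralizer_iff]
    intro s hs
    have hzs : s * z = z * s := Subgroup.mem_centralizer_iff.mp hz s hs
    calc s * φ z = φ s * φ z := by rw [hφ s hs]
    _ = φ (s * z) := (map_mul φ s z).symm
    _ = φ (z * s) := by rw [hzs]
    _ = φ z * φ s := map_mul φ z s
    _ = φ z * s := by rw [hφ s hs]
  have hφz1 : φ z ≠ 1 := by
    intro hc
    exact h1 (φ.injective (by rw [hc, map_one]))
  have := aux_eq hcard (x := (⟨φ z, hφz⟩ : ↥(Subgroup.centralizer (S : Set F))))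
    (y := ⟨z, hz⟩) (by simpa [Subtype.ext_iff] using hφz1) (by simpa [Subtype.ext_iff] using h1)
  exact congrArg Subtype.val this

lemma fixS_comm [S.Normal] (hcard : Nat.card ↥(Subgroup.centralizer (S : Set F)) ∣ 2)
    (φ ψ : ↥(fixS S)) : φ * ψ = ψ * φ := by
  ext f
  show (φ : MulAut F) ((ψ : MulAut F) f) = (ψ : MulAut F) ((φ : MulAut F) f)
  obtain ⟨c, hcZ, hcdef⟩ : ∃ c, c ∈ Subgroup.centralizer (S : Set F) ∧ (ψ : MulAut F) f = f * c :=
    ⟨_, fixS_c_mem S ψ.2 f, by group⟩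
  obtain ⟨d, hdZ, hddef⟩ : ∃ d, d ∈ Subgroup.centralizer (S : Set F) ∧ (φ : MulAut F) f = f * d :=
    ⟨_, fixS_c_mem S φ.2 f, by group⟩
  have hcomm : d * c = c * d := by
    have := aux_comm hcard (⟨d, hdZ⟩ : ↥(Subgroup.centralizer (S : Set F))) ⟨c, hcZ⟩
    exact congrArg Subtype.val this
  calc (φ : MulAut F) ((ψ : MulAut F) f) = (φ : MulAut F) (f * c) := by rw [hcdef]
  _ = (φ : MulAut F) f * (φ : MulAut F) c := map_mul _ _ _
  _ = f * d * c := by rw [hddef, fixS_fixes_cent S hcard φ.2 hcZ]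
  _ = f * (c * d) := by rw [mul_assoc, hcomm]
  _ = f * c * d := by rw [mul_assoc]
  _ = (ψ : MulAut F) f * d := by rw [← hcdef]
  _ = (ψ : MulAut F) f * (ψ : MulAut F) d := by rw [fixS_fixes_cent S hcard ψ.2 hdZ]
  _ = (ψ : MulAut F) ((φ : MulAut F) f) := by rw [← map_mul, ← hddef]

/-- Restriction of automorphisms of `F` to a subgroup stable under all automorphisms. -/
def resHom (h : ∀ (φ : MulAut F) (s : F), s ∈ S → φ s ∈ S) : MulAut F →* MulAut ↥S where
  toFun φ :=
  { toFun := fun s => ⟨φ ↑s, h φ ↑s s.2⟩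
    invFun := fun s => ⟨φ⁻¹ ↑s, h φ⁻¹ ↑s s.2⟩
    left_inv := fun s => Subtype.ext (φ.symm_apply_apply ↑s)
    right_inv := fun s => Subtype.ext (φ.apply_symm_apply ↑s)
    map_mul' := fun a b => Subtype.ext (map_mul φ a.1 b.1) }
  map_one' := by ext s; rfl
  map_mul' := fun a b => by ext s; rfl

end Main

/-- Let `F` be a finite group and `S ⊴ F` simple non-abelian of index 2.
If `Out(S)` is solvable, then `Out(F)` is solvable. -/
theorem stmt_5 {F : Type*} [Group F] [Finite F] (S : Subgroup F) [S.Normal]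
    [IsSimpleGroup S] (hna : ∃ a b : S, a * b ≠ b * a)
    (hidx : S.index = 2)
    (hOutS : IsSolvable (OutGroup ↥S)) :
    IsSolvable (OutGroup F) := by
  have hcent := aux_cent_card S hna hidx
  have hchar : ∀ (φ : MulAut F) (s : F), s ∈ S → φ s ∈ S := by
    intro φ s hs
    have hker : (φ : F →* F).ker ≤ S := by
      intro x hx
      have : φ x = 1 := hx
      have : x = 1 := φ.injective (by rw [this, map_one])
      rw [this]; exact S.one_mem
    have hmap : S.map (φ : F →* F) = S :=
      aux_unique S hna hidx _ (by
        rw [Subgroup.index_map_eq S φ.surjective hker]; exact hidx)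
    rw [← hmap]
    exact ⟨s, hs, rfl⟩
  haveI : IsSolvable (OutGroup ↥S) := hOutS
  let Φ : MulAut F →* OutGroup ↥S :=
    (QuotientGroup.mk' (MulAut.conj : ↥S →* MulAut ↥S).range).comp (resHom S hchar)
  let T' : Subgroup ↥Φ.range := Subgroup.map Φ.rangeRestrict (MulAut.conj : F →* MulAut F).range
  haveI hT'n : T'.Normal :=
    Subgroup.Normal.map innerAutRange_normal Φ.rangeRestrict Φ.rangeRestrict_surjective
  let g' : MulAut F →* ↥Φ.range ⧸ T' := (QuotientGroup.mk' T').comp Φ.rangeRestrict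
  have hg' : (MulAut.conj : F →* MulAut F).range ≤ g'.ker := by
    intro ι hι
    have : g' ι = 1 := by
      show QuotientGroup.mk' T' (Φ.rangeRestrict ι) = 1
      rw [QuotientGroup.mk'_apply, QuotientGroup.eq_one_iff]
      exact ⟨ι, hι, rfl⟩
    exact this
  let g : OutGroup F →* ↥Φ.range ⧸ T' := QuotientGroup.lift _ g' hg'
  haveI : IsSolvable ↥(fixS S) := isSolvable_of_comm (fixS_comm S hcent)
  have hfix : IsSolvable ↥(fixS S) := this
  haveI : IsSolvable ↥Φ.range := @Group.isSolvable_of_isSolvable_injective _ _ _ _ _ Φ.range.subtype_injective hOutS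
  haveI : IsSolvable (↥Φ.range ⧸ T') := @Group.isSolvable_of_surjective _ _ _ _ _ (QuotientGroup.mk'_surjective T') this
  apply solvable_of_ker_le_range
    ((QuotientGroup.mk' (MulAut.conj : F →* MulAut F).range).comp (fixS S).subtype) g (hG' := hfix) (hG'' := this)
  intro x hx
  obtain ⟨φ, rfl⟩ := QuotientGroup.mk'_surjective (MulAut.conj : F →* MulAut F).range x
  have hx1 : g' φ = 1 := hx
  have hx2 : Φ.rangeRestrict φ ∈ T' := by
    have : QuotientGroup.mk' T' (Φ.rangeRestrict φ) = 1 := hx1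
    rwa [QuotientGroup.mk'_apply, QuotientGroup.eq_one_iff] at this
  obtain ⟨ι, hι, heq⟩ := hx2
  obtain ⟨f0, rfl⟩ := hι
  have heq2 : Φ (MulAut.conj f0) = Φ φ := congrArg Subtype.val heq
  have hψ1 : Φ (φ * (MulAut.conj f0)⁻¹) = 1 := by
    rw [map_mul, map_inv, ← heq2, mul_inv_cancel]
  have hres : resHom S hchar (φ * (MulAut.conj f0)⁻¹) ∈
      (MulAut.conj : ↥S →* MulAut ↥S).range := by
    have : QuotientGroup.mk' (MulAut.conj : ↥S →* MulAut ↥S).range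
        (resHom S hchar (φ * (MulAut.conj f0)⁻¹)) = 1 := hψ1
    rwa [QuotientGroup.mk'_apply, QuotientGroup.eq_one_iff] at this
  obtain ⟨s, hs⟩ := hres
  set ψ := φ * (MulAut.conj f0)⁻¹ with hψdef
  have hχ : (MulAut.conj (s : F))⁻¹ * ψ ∈ fixS S := by
    intro x hxS
    show (MulAut.conj (s : F))⁻¹ (ψ x) = x
    have h1 : ψ x = (s : F) * x * (s : F)⁻¹ := by
      have := congrArg (fun e : MulAut ↥S => ((e ⟨x, hxS⟩ : ↥S) : F)) hs.symm
      simpa [resHom, MulAut.conj_apply] using this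
    rw [h1, MulAut.conj_inv_apply]
    group
  refine ⟨⟨_, hχ⟩, ?_⟩
  have hshow : ((QuotientGroup.mk' (MulAut.conj : F →* MulAut F).range).comp
      (fixS S).subtype) ⟨_, hχ⟩
      = QuotientGroup.mk' (MulAut.conj : F →* MulAut F).range
        ((MulAut.conj (s : F))⁻¹ * ψ) := rfl
  rw [hshow, QuotientGroup.mk'_apply, QuotientGroup.mk'_apply, QuotientGroup.eq]
  have hmem1 : (MulAut.conj f0 : MulAut F) ∈ (MulAut.conj : F →* MulAut F).range := ⟨f0, rfl⟩
  have hmem2 : (MulAut.conj (s : F) : MulAut F) ∈ (MulAut.conj : F →* MulAut F).range :=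
    ⟨(s : F), rfl⟩
  have : ((MulAut.conj (s : F))⁻¹ * ψ)⁻¹ * φ
      = ψ⁻¹ * MulAut.conj (s : F) * φ := by group
  rw [this, hψdef]
  have : (φ * (MulAut.conj f0)⁻¹)⁻¹ * MulAut.conj (s : F) * φ
      = MulAut.conj f0 * (φ⁻¹ * MulAut.conj (s : F) * φ) := by group
  rw [this]
  exact Subgroup.mul_mem _ hmem1
    (Subgroup.Normal.conj_mem' innerAutRange_normal _ hmem2 φ)
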